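/- (Subtree inequality, the induction claim in the proof of Theorem 1.) Let n ∈ ℕ and let θ, θ̃ be angle assignments on depth n with prepared amplitudes ψ and ψ̃. Fix a bitstring x of length k with 0 ≤ k ≤ n and define the subtree overlap H_x = Σ_{s ∈ {0,1}^{n−k}} ψ_{xs} · ψ̃_{xs}, where xs denotes concatenation. Then H_x ≥ W_x − Σ_{j=k}^{n−1} Σ_{y ∈ {0,1}^j, y extends x} W_y · (1 − cos((θ_y − θ̃_y)/2)), where a bitstring y extends x if x is a prefix of y. -/
import Mathlib


/-- `g θ i`: `g(θ,0) = cos(θ/2)`, `g(θ,1) = sin(θ/2)`, with bits as `Bool`. -/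
noncomputable def g (θ : ℝ) : Bool → ℝ
  | false => Real.cos (θ / 2)
  | true  => Real.sin (θ / 2)

/-- Prepared amplitude `ψ_b = ∏_{l=1}^n g(θ_{b_1…b_{l−1}}, b_l)`. -/
noncomputable def amp (n : ℕ) (θ : (j : ℕ) → (Fin j → Bool) → ℝ) (b : Fin n → Bool) : ℝ :=
  ∏ l : Fin n, g (θ l (fun i : Fin l => b (Fin.castLE l.isLt.le i))) (b l)

/-- Joint weight `W_x = ∏_{l=1}^k g(θ_{x_1…x_{l−1}}, x_l)·g(θ'_{x_1…x_{l−1}}, x_l)`. -/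
noncomputable def W (θ θ' : (j : ℕ) → (Fin j → Bool) → ℝ) (k : ℕ) (x : Fin k → Bool) : ℝ :=
  ∏ l : Fin k,
    (g (θ l (fun i : Fin l => x (Fin.castLE l.isLt.le i))) (x l) *
      g (θ' l (fun i : Fin l => x (Fin.castLE l.isLt.le i))) (x l))

/-- Concatenation `xs ∈ {0,1}^n` of `x ∈ {0,1}^k` and `s ∈ {0,1}^{n−k}` for `k ≤ n`. -/
def appendBits {n k : ℕ} (hk : k ≤ n) (x : Fin k → Bool) (s : Fin (n - k) → Bool)
    (i : Fin n) : Bool :=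
  Fin.append x s (Fin.cast (by omega) i)

lemma snoc_apply' {k : ℕ} {α : Type*} (x : Fin k → α) (b : α) (j : Fin (k+1)) :
    (Fin.snoc x b : Fin (k+1) → α) j = if h : (j:ℕ) < k then x ⟨j, h⟩ else b := by
  unfold Fin.snoc
  split <;> simp [Fin.castLT]

lemma appendBits_apply {n k : ℕ} (hk : k ≤ n) (x : Fin k → Bool) (s : Fin (n-k) → Bool)
    (i : Fin n) :
    appendBits hk x s i = if h : (i:ℕ) < k then x ⟨i, h⟩ else s ⟨i - k, by omega⟩ := by
  unfold appendBits Fin.append Fin.addCases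
  split <;> rename_i h <;> simp only [Fin.coe_cast] at h <;> simp [h, Fin.castLT, Fin.subNat]

def joinBit {n k : ℕ} (hk : k < n) (b : Bool) (t : Fin (n - (k+1)) → Bool) :
    Fin (n - k) → Bool :=
  fun i => if h : (i:ℕ) = 0 then b else t ⟨(i:ℕ) - 1, by omega⟩

lemma sum_join {n k : ℕ} (hk : k < n) (F : (Fin (n-k) → Bool) → ℝ) :
    ∑ s : Fin (n-k) → Bool, F s
      = ∑ b : Bool, ∑ t : Fin (n-(k+1)) → Bool, F (joinBit hk b t) := by
  have hbij : Function.Bijective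
      (fun p : Bool × (Fin (n-(k+1)) → Bool) => joinBit hk p.1 p.2) := by
    apply Function.bijective_iff_has_inverse.mpr
    refine ⟨fun s => (s ⟨0, by omega⟩, fun i => s ⟨(i:ℕ)+1, by omega⟩), ?_, ?_⟩
    · rintro ⟨b, t⟩
      refine Prod.ext (by simp [joinBit]) ?_
      funext i
      simp only [joinBit]
      rw [dif_neg (by simp)]
      exact congrArg t (Fin.ext (by simp))
    · intro s
      funext i
      simp only [joinBit]
      by_cases h : (i:ℕ) = 0
      · rw [dif_pos h]; exact congrArg s (Fin.ext (by simp [h]))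
      · rw [dif_neg h]; exact congrArg s (Fin.ext (by simp; omega))
  rw [← Fintype.sum_bijective _ hbij _ F (fun p => rfl), Fintype.sum_prod_type]

lemma appendBits_join {n k : ℕ} (hk : k < n) (x : Fin k → Bool) (b : Bool)
    (t : Fin (n-(k+1)) → Bool) :
    appendBits hk.le x (joinBit hk b t) = appendBits hk (Fin.snoc x b) t := by
  funext i
  rw [appendBits_apply, appendBits_apply]
  simp only [joinBit, snoc_apply']
  split_ifs <;> rename_i ha hb <;> first | rfl | omega

lemma trunc_snoc {k m : ℕ} (x : Fin k → Bool) (b : Bool) (hm : m ≤ k) (h2 : m ≤ k+1) :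
    (fun i : Fin m => (Fin.snoc x b : Fin (k+1) → Bool) (Fin.castLE h2 i))
      = fun i : Fin m => x (Fin.castLE hm i) := by
  funext i
  have hi : (i : ℕ) < k := lt_of_lt_of_le i.isLt hm
  simp [snoc_apply', hi, Fin.castLE]

lemma W_snoc (θ θ' : (j : ℕ) → (Fin j → Bool) → ℝ) (k : ℕ) (x : Fin k → Bool) (b : Bool) :
    W θ θ' (k+1) (Fin.snoc x b) = W θ θ' k x * (g (θ k x) b * g (θ' k x) b) := by
  unfold W
  rw [Fin.prod_univ_castSucc]
  congr 1
  · apply Finset.prod_congr rfl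
    intro l _
    simp only [Fin.coe_castSucc, Fin.snoc_castSucc]
    rw [trunc_snoc x b l.isLt.le]
  · simp only [Fin.val_last, Fin.snoc_last]
    rw [trunc_snoc x b le_rfl]
    simp [Fin.castLE]

lemma amp_mul (n : ℕ) (θ θ' : (j : ℕ) → (Fin j → Bool) → ℝ) (z : Fin n → Bool) :
    amp n θ z * amp n θ' z = W θ θ' n z := by
  rw [amp, amp, W, Finset.prod_mul_distrib]

lemma appendBits_self {n : ℕ} (hk : n ≤ n) (x : Fin n → Bool) (s : Fin (n-n) → Bool) :
    appendBits hk x s = x := by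
  funext i
  rw [appendBits_apply, dif_pos i.isLt]

open scoped Classical in
lemma cond_split {k j : ℕ} (hkj : k < j) (x : Fin k → Bool) (y : Fin j → Bool) (v : ℝ) :
    ∑ b : Bool, (if ∀ (i : Fin (k+1)) (hi : (i:ℕ) < j), y ⟨i, hi⟩ = (Fin.snoc x b : Fin (k+1) → Bool) i
        then v else 0)
      = if ∀ (i : Fin k) (hi : (i:ℕ) < j), y ⟨i, hi⟩ = x i then v else 0 := by
  have key : ∀ b : Bool, (∀ (i : Fin (k+1)) (hi : (i:ℕ) < j), y ⟨i, hi⟩ = (Fin.snoc x b : Fin (k+1) → Bool) i)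
      ↔ ((∀ (i : Fin k) (hi : (i:ℕ) < j), y ⟨i, hi⟩ = x i) ∧ y ⟨k, hkj⟩ = b) := by
    intro b
    constructor
    · intro h
      constructor
      · intro i hi
        have h2 := h ⟨(i:ℕ), by omega⟩ hi
        rw [snoc_apply'] at h2
        simpa [i.isLt] using h2
      · have h2 := h ⟨k, by omega⟩ hkj
        rw [snoc_apply'] at h2
        simpa using h2
    · rintro ⟨hQ, hb⟩ i hi
      rw [snoc_apply']
      by_cases hik : (i:ℕ) < k
      · rw [dif_pos hik]
        exact hQ ⟨(i:ℕ), hik⟩ hi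
      · rw [dif_neg hik]
        have he : (⟨(i:ℕ), hi⟩ : Fin j) = ⟨k, hkj⟩ := Fin.mk_eq_mk.mpr (by omega)
        rw [he, hb]
  by_cases hQ : ∀ (i : Fin k) (hi : (i:ℕ) < j), y ⟨i, hi⟩ = x i
  · rw [Fintype.sum_bool]
    simp only [key, hQ, true_and, if_pos hQ]
    cases h : y ⟨k, hkj⟩ <;> simp [h]
  · simp [key, hQ]

open scoped Classical in
lemma cond_base {k : ℕ} (x : Fin k → Bool) (f : (Fin k → Bool) → ℝ) :
    ∑ y : Fin k → Bool,
        (if ∀ (i : Fin k) (hi : (i:ℕ) < k), y ⟨i, hi⟩ = x i then f y else 0) = f x := by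
  have h : ∀ y : Fin k → Bool,
      (∀ (i : Fin k) (hi : (i:ℕ) < k), y ⟨i, hi⟩ = x i) ↔ y = x := by
    intro y
    constructor
    · intro h; funext i; have := h i i.isLt; simpa using this
    · rintro rfl i hi; exact congrArg y (Fin.ext rfl)
  simp only [h]
  rw [Finset.sum_ite_eq' Finset.univ x f]
  simp

open scoped Classical in
/-- Subtree inequality (induction claim in the proof of Theorem 1): for a bitstring `x`
of length `k ≤ n`, the subtree overlap `H_x = Σ_{s∈{0,1}^{n−k}} ψ_{xs} ψ'_{xs}` satisfies
`H_x ≥ W_x − Σ_{j=k}^{n−1} Σ_{y∈{0,1}^j, y extends x} W_y·(1 − cos((θ_y − θ'_y)/2))`. -/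
theorem stmt6 (n k : ℕ) (hk : k ≤ n)
    (θ θ' : (j : ℕ) → (Fin j → Bool) → ℝ)
    (x : Fin k → Bool) :
    (∑ s : Fin (n - k) → Bool,
        amp n θ (appendBits hk x s) * amp n θ' (appendBits hk x s))
      ≥ W θ θ' k x - ∑ j ∈ Finset.Ico k n, ∑ y : Fin j → Bool,
          (if ∀ (i : Fin k) (hi : (i : ℕ) < j), y ⟨i, hi⟩ = x i
            then W θ θ' j y * (1 - Real.cos ((θ j y - θ' j y) / 2)) else 0) := by
  suffices H : ∀ d k (hk : k ≤ n) (x : Fin k → Bool), n - k = d →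
      (∑ s : Fin (n - k) → Bool,
          amp n θ (appendBits hk x s) * amp n θ' (appendBits hk x s))
        ≥ W θ θ' k x - ∑ j ∈ Finset.Ico k n, ∑ y : Fin j → Bool,
            (if ∀ (i : Fin k) (hi : (i : ℕ) < j), y ⟨i, hi⟩ = x i
              then W θ θ' j y * (1 - Real.cos ((θ j y - θ' j y) / 2)) else 0) by
    exact H (n - k) k hk x rfl
  intro d
  induction d with
  | zero =>
    intro k hk x hd
    have hkn : k = n := by omega
    subst hkn
    rw [Finset.Ico_self, Finset.sum_empty, sub_zero]
    have hconst : ∀ s : Fin (k - k) → Bool,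
        amp k θ (appendBits hk x s) * amp k θ' (appendBits hk x s) = W θ θ' k x := by
      intro s
      rw [appendBits_self hk x s, amp_mul]
    rw [Finset.sum_congr rfl (fun s _ => hconst s), Finset.sum_const, Finset.card_univ]
    have hcard : Fintype.card (Fin (k - k) → Bool) = 1 := by
      simp [Nat.sub_self]
    rw [hcard, one_smul]
  | succ d ih =>
    intro k hk x hd
    have hkn : k < n := by omega
    have hk1 : k + 1 ≤ n := hkn
    -- abbreviations
    set Δ := Real.cos ((θ k x - θ' k x) / 2) with hΔ
    -- sum of W over children
    have hW : ∑ b : Bool, W θ θ' (k+1) (Fin.snoc x b) = W θ θ' k x * Δ := by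
      rw [Fintype.sum_bool, W_snoc, W_snoc, ← mul_add]
      congr 1
      simp only [g, hΔ, sub_div, Real.cos_sub]
      ring
    -- tail sum identity
    have hT : (∑ j ∈ Finset.Ico k n, ∑ y : Fin j → Bool,
          (if ∀ (i : Fin k) (hi : (i : ℕ) < j), y ⟨i, hi⟩ = x i
            then W θ θ' j y * (1 - Real.cos ((θ j y - θ' j y) / 2)) else 0))
        = W θ θ' k x * (1 - Δ)
          + ∑ b : Bool, ∑ j ∈ Finset.Ico (k+1) n, ∑ y : Fin j → Bool,
              (if ∀ (i : Fin (k+1)) (hi : (i : ℕ) < j),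
                    y ⟨i, hi⟩ = (Fin.snoc x b : Fin (k+1) → Bool) i
                then W θ θ' j y * (1 - Real.cos ((θ j y - θ' j y) / 2)) else 0) := by
      rw [Finset.sum_eq_sum_Ico_succ_bot hkn]
      congr 1
      · exact cond_base x (fun y => W θ θ' k y * (1 - Real.cos ((θ k y - θ' k y) / 2)))
      · rw [Finset.sum_comm]
        apply Finset.sum_congr rfl
        intro j hj
        have hkj : k < j := (Finset.mem_Ico.mp hj).1
        rw [Finset.sum_comm]
        apply Finset.sum_congr rfl
        intro y _
        exact (cond_split hkj x y _).symm
    rw [sum_join hkn]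
    have hstep : ∀ b : Bool,
        (∑ t : Fin (n-(k+1)) → Bool,
            amp n θ (appendBits hk x (joinBit hkn b t))
              * amp n θ' (appendBits hk x (joinBit hkn b t)))
          ≥ W θ θ' (k+1) (Fin.snoc x b)
            - ∑ j ∈ Finset.Ico (k+1) n, ∑ y : Fin j → Bool,
                (if ∀ (i : Fin (k+1)) (hi : (i : ℕ) < j),
                      y ⟨i, hi⟩ = (Fin.snoc x b : Fin (k+1) → Bool) i
                  then W θ θ' j y * (1 - Real.cos ((θ j y - θ' j y) / 2)) else 0) := by
      intro b
      have hrw : ∀ t : Fin (n-(k+1)) → Bool,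
          appendBits hk x (joinBit hkn b t) = appendBits hk1 (Fin.snoc x b) t :=
        fun t => appendBits_join hkn x b t
      calc (∑ t : Fin (n-(k+1)) → Bool,
              amp n θ (appendBits hk x (joinBit hkn b t))
                * amp n θ' (appendBits hk x (joinBit hkn b t)))
          = ∑ t : Fin (n-(k+1)) → Bool,
              amp n θ (appendBits hk1 (Fin.snoc x b) t)
                * amp n θ' (appendBits hk1 (Fin.snoc x b) t) := by
            exact Finset.sum_congr rfl (fun t _ => by rw [hrw t])
        _ ≥ _ := ih (k+1) hk1 (Fin.snoc x b) (by omega)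
    have hsum := Finset.sum_le_sum (s := Finset.univ) (fun b _ => hstep b)
    refine le_trans ?_ hsum
    rw [Finset.sum_sub_distrib, hW, hT]
    have hcos : Δ ≤ 1 := Real.cos_le_one _
    linarith
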